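/- For a finite tree t with n nodes and a node u, the number of histories of t rooted at u (i.e., orderings v_1,...,v_n of the vertices with v_1 = u such that the induced subgraph on {v_1,...,v_k} is connected for every k) equals (n-1)! divided by the product over all nodes v ≠ u of the size of the subtree rooted at v when t is viewed as rooted at u. -/

import Mathlib

open scoped Classical
open SimpleGraph Finset

variable {V : Type*}

/-- A history of a graph `G`: an ordering of all vertices (no repeats) such that
every nonempty prefix induces a connected subgraph. -/
def IsHistory (G : SimpleGraph V) (l : List V) : Prop :=
  l.Nodup ∧ (∀ v : V, v ∈ l) ∧ ∀ k : ℕ, 1 ≤ k → (G.induce {v | v ∈ l.take k}).Connected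

/-- Number of histories of `G` rooted at (i.e. starting with) `u`. -/
noncomputable def nHist (G : SimpleGraph V) (u : V) : ℕ :=
  Nat.card {l : List V // IsHistory G l ∧ l.head? = some u}

/-- Total number of histories of `G`. -/
noncomputable def nHistAll (G : SimpleGraph V) : ℕ :=
  Nat.card {l : List V // IsHistory G l}

/-- Size of the subtree of `G` rooted at `v` away from `u`: the number of vertices `w`
such that every walk from `w` to `u` passes through `v`. -/
noncomputable def subtreeSize (G : SimpleGraph V) (u v : V) : ℕ :=
  Nat.card {w : V | ∀ p : G.Walk w u, v ∈ p.support}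


section Abstract

variable [DecidableEq V] (anc : V → V → Prop)

/-- linear extension property -/
def ExtL (l : List V) : Prop :=
  ∀ k v w, w ∈ l.take k → v ∈ l → anc v w → v ∈ l.take k

/-- the finset of linear extensions of `s` -/
noncomputable def histsF (s : Finset V) : Finset (List V) :=
  s.toList.permutations.toFinset.filter (fun l => ExtL anc l)

lemma mem_histsF {s : Finset V} {l : List V} :
    l ∈ histsF anc s ↔ l.Nodup ∧ l.toFinset = s ∧ ExtL anc l := by
  rw [histsF, Finset.mem_filter, List.mem_toFinset, List.mem_permutations]
  constructor
  · rintro ⟨hp, he⟩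
    refine ⟨hp.nodup_iff.2 s.nodup_toList, ?_, he⟩
    rw [List.toFinset_eq_of_perm _ _ hp, Finset.toList_toFinset]
  · rintro ⟨h1, h2, he⟩
    refine ⟨List.perm_of_nodup_nodup_toFinset_eq h1 s.nodup_toList ?_, he⟩
    rw [h2, Finset.toList_toFinset]

/-- descendants of `v` within `s` -/
noncomputable def dscF (s : Finset V) (v : V) : Finset V := s.filter (fun w => anc v w)

/-- subtree size within `s` -/
noncomputable def hF (s : Finset V) (v : V) : ℕ := (dscF anc s v).card

/-- maximal elements of `s` -/
noncomputable def MF (s : Finset V) : Finset V := s.filter (fun m => ∀ w ∈ s, anc m w → w = m)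

/-- strict ancestors of `m` within `s` -/
noncomputable def AF (s : Finset V) (m : V) : Finset V := (s.filter (fun v => anc v m)).erase m


variable {anc : V → V → Prop}

lemma mem_MF {s : Finset V} {m : V} :
    m ∈ MF anc s ↔ m ∈ s ∧ ∀ w ∈ s, anc m w → w = m := by
  simp [MF]

lemma histsF_empty : histsF anc (∅ : Finset V) = {[]} := by
  ext l
  simp only [mem_histsF, Finset.mem_singleton]
  constructor
  · rintro ⟨-, hts, -⟩
    simpa using hts
  · rintro rfl
    refine ⟨List.nodup_nil, by simp, ?_⟩
    intro k v w hw hv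
    simp at hv

lemma step1 {s : Finset V} {l : List V} (hl : l ∈ histsF anc s) (hne : l ≠ []) :
    l.getLast hne ∈ MF anc s ∧ l.dropLast ∈ histsF anc (s.erase (l.getLast hne)) := by
  obtain ⟨hnd, hts, hext⟩ := (mem_histsF _).1 hl
  set m := l.getLast hne with hm
  have hsplit : l.dropLast ++ [m] = l := List.dropLast_append_getLast hne
  have hnd' : l.dropLast.Nodup := hnd.sublist (List.dropLast_sublist l)
  have hmnot : m ∉ l.dropLast := by
    have := hnd
    rw [← hsplit, List.nodup_append] at this
    intro hmem
    exact this.2.2 m hmem m (by simp) rfl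
  have hms : m ∈ s := by
    rw [← hts, List.mem_toFinset]
    exact List.getLast_mem hne
  have htsd : l.dropLast.toFinset = s.erase m := by
    have h1 : s = insert m l.dropLast.toFinset := by
      rw [← hts]
      conv_lhs => rw [← hsplit]
      rw [List.toFinset_append, Finset.union_comm]
      simp
    rw [h1, Finset.erase_insert (by simpa using hmnot)]
  have hmemdrop : ∀ w, w ∈ l → w ≠ m → w ∈ l.dropLast := by
    intro w hw hwm
    rw [← hsplit, List.mem_append] at hw
    rcases hw with h | h
    · exact h
    · simp at h; exact absurd h hwm
  have hmax : ∀ w ∈ s, anc m w → w = m := by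
    intro w hw hanc
    by_contra hwm
    have hwl : w ∈ l := by rw [← hts, List.mem_toFinset] at hw; exact hw
    have hwd : w ∈ l.dropLast := hmemdrop w hwl hwm
    rw [List.dropLast_eq_take] at hwd
    have := hext (l.length - 1) m w hwd (List.getLast_mem hne) hanc
    rw [← List.dropLast_eq_take] at this
    exact hmnot this
  refine ⟨mem_MF.2 ⟨hms, hmax⟩, (mem_histsF _).2 ⟨hnd', htsd, ?_⟩⟩
  intro k v w hw hv hanc
  rw [List.dropLast_eq_take, List.take_take] at hw ⊢
  exact hext _ v w hw ((List.dropLast_sublist l).subset hv) hanc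

lemma step2 {s : Finset V} {m : V} (hm : m ∈ MF anc s) {l' : List V}
    (hl' : l' ∈ histsF anc (s.erase m)) : l'.concat m ∈ histsF anc s := by
  obtain ⟨hnd', hts', hext'⟩ := (mem_histsF _).1 hl'
  obtain ⟨hms, hmax⟩ := mem_MF.1 hm
  have hmnot : m ∉ l' := by
    intro h
    rw [← List.mem_toFinset, hts'] at h
    exact (Finset.notMem_erase m s) h
  rw [List.concat_eq_append]
  refine (mem_histsF _).2 ⟨?_, ?_, ?_⟩
  · rw [List.nodup_append]
    exact ⟨hnd', List.nodup_singleton m, by simpa [List.disjoint_singleton] using fun a ha (h : a = m) => hmnot (h ▸ ha)⟩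
  · rw [List.toFinset_append]
    simp only [List.toFinset_cons, List.toFinset_nil, LawfulSingleton.insert_empty_eq]
    rw [hts', Finset.union_comm]
    simpa using Finset.insert_erase hms
  · intro k v w hw hv hanc
    by_cases hk : k ≤ l'.length
    · rw [List.take_append_of_le_length hk] at hw ⊢
      rcases List.mem_append.1 hv with hv' | hv'
      · exact hext' k v w hw hv' hanc
      · simp only [List.mem_singleton] at hv'
        exfalso
        have hws : w ∈ s.erase m := by
          rw [← hts', List.mem_toFinset]
          exact List.take_subset _ _ hw
        have := hmax w (Finset.mem_of_mem_erase hws) (by rwa [hv'] at hanc)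
        exact (Finset.ne_of_mem_erase hws) this
    · rw [List.take_of_length_le (by simp; omega)]
      exact hv

lemma histsF_rec {s : Finset V} (hs : s.Nonempty) :
    (histsF anc s).card = ∑ m ∈ MF anc s, (histsF anc (s.erase m)).card := by
  obtain ⟨x₀, hx₀⟩ := hs
  have hne : ∀ l ∈ histsF anc s, l ≠ [] := by
    intro l hl h
    obtain ⟨-, hts, -⟩ := (mem_histsF _).1 hl
    subst h
    simp only [List.toFinset_nil] at hts
    rw [← hts] at hx₀
    simp at hx₀
  have hgl : ∀ (l : List V) (h : l ≠ []), l.getLastD x₀ = l.getLast h := by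
    intro l h
    rw [List.getLastD_eq_getLast?, List.getLast?_eq_getLast h]
    rfl
  rw [Finset.card_eq_sum_card_fiberwise (f := fun l => l.getLastD x₀) (t := MF anc s)
    (fun l hl => by show l.getLastD x₀ ∈ MF anc s; rw [hgl l (hne l hl)]; exact (step1 hl (hne l hl)).1)]
  refine Finset.sum_congr rfl fun m hm => ?_
  refine Finset.card_bij' (fun l _ => l.dropLast) (fun l' _ => l'.concat m) ?_ ?_ ?_ ?_
  · intro l hl
    obtain ⟨hl1, hl2⟩ := Finset.mem_filter.1 hl
    have h := (step1 hl1 (hne l hl1)).2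
    rwa [← hgl l (hne l hl1), hl2] at h
  · intro l' hl'
    refine Finset.mem_filter.2 ⟨step2 hm hl', ?_⟩
    show (l'.concat m).getLastD x₀ = m
    rw [List.concat_eq_append, List.getLastD_concat]
  · intro l hl
    obtain ⟨hl1, hl2⟩ := Finset.mem_filter.1 hl
    show l.dropLast.concat m = l
    rw [List.concat_eq_append, ← hl2, hgl l (hne l hl1)]
    exact List.dropLast_append_getLast _
  · intro l' _
    show (l'.concat m).dropLast = l'
    rw [List.concat_eq_append]
    exact List.dropLast_concat


lemma mem_dscF {s : Finset V} {v w : V} : w ∈ dscF anc s v ↔ w ∈ s ∧ anc v w := by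
  simp [dscF]

lemma mem_AF {s : Finset V} {m v : V} : v ∈ AF anc s m ↔ v ∈ s ∧ anc v m ∧ v ≠ m := by
  simp [AF, Finset.mem_erase]
  tauto

section Hyps

variable (hrefl : ∀ v : V, anc v v)
  (htrans : ∀ a b c : V, anc a b → anc b c → anc a c)
  (hanti : ∀ a b : V, anc a b → anc b a → a = b)
  (hchain : ∀ v v' w : V, anc v w → anc v' w → anc v v' ∨ anc v' v)

include hrefl htrans hanti in
lemma exists_minimal {s : Finset V} (hs : s.Nonempty) :
    ∃ r ∈ s, ∀ v ∈ s, anc v r → v = r := by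
  obtain ⟨r, hr, hmax⟩ := s.exists_max_image (hF anc s) hs
  refine ⟨r, hr, ?_⟩
  intro v hv hvr
  by_contra hne
  have h1 : dscF anc s r ⊆ dscF anc s v := by
    intro w hw
    obtain ⟨hw1, hw2⟩ := mem_dscF.1 hw
    exact mem_dscF.2 ⟨hw1, htrans v r w hvr hw2⟩
  have h2 : v ∈ dscF anc s v := mem_dscF.2 ⟨hv, hrefl v⟩
  have h3 : v ∉ dscF anc s r := by
    intro h
    exact hne (hanti v r hvr (mem_dscF.1 h).2)
  have hlt : hF anc s r < hF anc s v :=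
    Finset.card_lt_card ⟨h1, fun hsub => h3 (hsub h2)⟩
  exact absurd (hmax v hv) (not_le.2 hlt)

include hrefl htrans hanti hchain in
lemma identF : ∀ (n : ℕ) (s : Finset V), s.card = n →
    ∑ m ∈ MF anc s, ∏ v ∈ AF anc s m, ((hF anc s v : ℚ) / ((hF anc s v : ℚ) - 1))
      = s.card := by
  intro n
  induction n using Nat.strong_induction_on with
  | _ n ih =>
  intro s hcard
  rcases s.eq_empty_or_nonempty with rfl | hs
  · simp [MF]
  subst hcard
  obtain ⟨r, hr, hrmin⟩ := exists_minimal hrefl htrans hanti hs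
  set D := dscF anc s r with hD
  have hrD : r ∈ D := mem_dscF.2 ⟨hr, hrefl r⟩
  have hDsub : D ⊆ s := Finset.filter_subset _ _
  have hDpos : 1 ≤ D.card := Finset.card_pos.2 ⟨r, hrD⟩
  rcases le_or_gt D.card 1 with hD1 | hD2
  · -- D = {r}; r is both minimal and maximal
    have hDr : D = {r} := by
      obtain ⟨a, ha⟩ := Finset.card_eq_one.1 (le_antisymm hD1 hDpos)
      rw [ha] at hrD ⊢
      rw [Finset.mem_singleton.1 hrD]
    have hrmax : ∀ w ∈ s, anc r w → w = r := by
      intro w hw hrw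
      have : w ∈ D := mem_dscF.2 ⟨hw, hrw⟩
      rw [hDr] at this
      simpa using this
    have hMs : MF anc s = insert r (MF anc (s.erase r)) := by
      ext m
      simp only [mem_MF, Finset.mem_insert, Finset.mem_erase]
      constructor
      · rintro ⟨hms, hmmax⟩
        by_cases hmr : m = r
        · exact Or.inl hmr
        · exact Or.inr ⟨⟨hmr, hms⟩, fun w hw hmw => hmmax w hw.2 hmw⟩
      · rintro (rfl | ⟨⟨hmr, hms⟩, hmmax⟩)
        · exact ⟨hr, hrmax⟩
        · refine ⟨hms, fun w hw hmw => ?_⟩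
          by_cases hwr : w = r
          · subst hwr
            exact absurd (hrmin m hms hmw) hmr
          · exact hmmax w ⟨hwr, hw⟩ hmw
    have hrnot : r ∉ MF anc (s.erase r) := by
      intro h
      exact (Finset.notMem_erase r s) (mem_MF.1 h).1
    rw [hMs, Finset.sum_insert hrnot]
    have hAr : AF anc s r = ∅ := by
      ext v
      simp only [mem_AF, Finset.notMem_empty, iff_false]
      rintro ⟨hv1, hv2, hv3⟩
      exact hv3 (hrmin v hv1 hv2)
    rw [hAr, Finset.prod_empty]
    have hcongr : ∀ m ∈ MF anc (s.erase r),
        ∏ v ∈ AF anc s m, ((hF anc s v : ℚ) / ((hF anc s v : ℚ) - 1))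
          = ∏ v ∈ AF anc (s.erase r) m, ((hF anc (s.erase r) v : ℚ) / ((hF anc (s.erase r) v : ℚ) - 1)) := by
      intro m hm
      have hmr : m ≠ r := Finset.ne_of_mem_erase (mem_MF.1 hm).1
      have hvnr : ∀ v, anc v m → v ∈ s → v ≠ r := by
        intro v hvm hvs hvr
        subst hvr
        exact hmr (hrmax m (Finset.mem_of_mem_erase (mem_MF.1 hm).1) hvm)
      have hA : AF anc s m = AF anc (s.erase r) m := by
        ext v
        simp only [mem_AF, Finset.mem_erase]
        constructor
        · rintro ⟨hv1, hv2, hv3⟩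
          exact ⟨⟨hvnr v hv2 hv1, hv1⟩, hv2, hv3⟩
        · rintro ⟨⟨_, hv1⟩, hv2, hv3⟩
          exact ⟨hv1, hv2, hv3⟩
      rw [← hA]
      refine Finset.prod_congr rfl fun v hv => ?_
      obtain ⟨hv1, hv2, hv3⟩ := mem_AF.1 hv
      have hdsc : dscF anc s v = dscF anc (s.erase r) v := by
        ext w
        simp only [mem_dscF, Finset.mem_erase]
        constructor
        · rintro ⟨hw1, hw2⟩
          refine ⟨⟨?_, hw1⟩, hw2⟩
          intro hwr
          subst hwr
          exact (hvnr v hv2 hv1) (hrmin v hv1 hw2)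
        · rintro ⟨⟨_, hw1⟩, hw2⟩
          exact ⟨hw1, hw2⟩
      rw [hF, hF, hdsc]
    rw [Finset.sum_congr rfl hcongr]
    have hlt : (s.erase r).card < s.card := Finset.card_erase_lt_of_mem hr
    rw [ih _ hlt _ rfl, Finset.card_erase_of_mem hr]
    have h1 : 1 ≤ s.card := Finset.card_pos.2 hs
    push_cast [Nat.cast_sub h1]
    ring
  · -- D.card ≥ 2
    set D' := D.erase r with hD'
    set C := s \ D with hC
    have hD'sub : D' ⊆ s := fun v hv => hDsub (Finset.mem_of_mem_erase hv)
    have hD'card : D'.card = D.card - 1 := Finset.card_erase_of_mem hrD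
    have hD'ne : D'.Nonempty := Finset.card_pos.1 (by omega)
    have hCsub : C ⊆ s := Finset.sdiff_subset
    have hrC : r ∉ C := fun h => (Finset.mem_sdiff.1 h).2 hrD
    have hD'lt : D'.card < s.card := Finset.card_lt_card ⟨hD'sub, fun hsub =>
      (Finset.notMem_erase r D) (hsub hr)⟩
    have hClt : C.card < s.card := Finset.card_lt_card ⟨hCsub, fun hsub => hrC (hsub hr)⟩
    -- membership helpers
    have hmemD : ∀ w, w ∈ D ↔ (w ∈ s ∧ anc r w) := fun w => mem_dscF
    -- claim: no element of C has a descendant in D and vice versa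
    have hkey1 : ∀ v ∈ C, ∀ w ∈ D, ¬ anc v w := by
      intro v hv w hw hvw
      have hrw : anc r w := (mem_dscF.1 hw).2
      rcases hchain v r w hvw hrw with h | h
      · have hvr : v = r := hrmin v (hCsub hv) h
        exact (Finset.mem_sdiff.1 hv).2 (hvr ▸ hrD)
      · exact (Finset.mem_sdiff.1 hv).2 (mem_dscF.2 ⟨(Finset.mem_sdiff.1 hv).1, h⟩)
    have hkey2 : ∀ v ∈ D', ∀ w ∈ s, anc v w → w ∈ D' := by
      intro v hv w hw hvw
      have hrv : anc r v := (mem_dscF.1 (Finset.mem_of_mem_erase hv)).2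
      have hrw : anc r w := htrans r v w hrv hvw
      refine Finset.mem_erase.2 ⟨?_, mem_dscF.2 ⟨hw, hrw⟩⟩
      intro hwr
      subst hwr
      exact (Finset.mem_erase.1 hv).1 (hrmin v (hD'sub hv) hvw)
    -- MF s = MF D' ∪ MF C
    have hMF : MF anc s = MF anc D' ∪ MF anc C := by
      ext m
      simp only [Finset.mem_union, mem_MF]
      constructor
      · rintro ⟨hms, hmax⟩
        have hmr : m ≠ r := by
          rintro rfl
          obtain ⟨w, hw⟩ := hD'ne
          exact (Finset.mem_erase.1 hw).1
            (hmax w (hD'sub hw) (mem_dscF.1 (Finset.mem_of_mem_erase hw)).2)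
        by_cases hmD : m ∈ D
        · exact Or.inl ⟨Finset.mem_erase.2 ⟨hmr, hmD⟩,
            fun w hw hmw => hmax w (hD'sub hw) hmw⟩
        · exact Or.inr ⟨Finset.mem_sdiff.2 ⟨hms, hmD⟩,
            fun w hw hmw => hmax w (hCsub hw) hmw⟩
      · rintro (⟨hm1, hm2⟩ | ⟨hm1, hm2⟩)
        · refine ⟨hD'sub hm1, fun w hw hmw => hm2 w (hkey2 m hm1 w hw hmw) hmw⟩
        · refine ⟨hCsub hm1, fun w hw hmw => ?_⟩
          by_cases hwD : w ∈ D
          · exact absurd hmw (hkey1 m hm1 w hwD)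
          · exact hm2 w (Finset.mem_sdiff.2 ⟨hw, hwD⟩) hmw
    have hdisj : Disjoint (MF anc D') (MF anc C) := by
      refine Finset.disjoint_left.2 fun m hm1 hm2 => ?_
      have h1 : m ∈ D' := (mem_MF.1 hm1).1
      have h2 : m ∈ C := (mem_MF.1 hm2).1
      exact (Finset.mem_sdiff.1 h2).2 (Finset.mem_of_mem_erase h1)
    rw [hMF, Finset.sum_union hdisj]
    -- dsc agreement
    have hdscD' : ∀ v ∈ D', dscF anc s v = dscF anc D' v := by
      intro v hv
      ext w
      simp only [mem_dscF]
      constructor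
      · rintro ⟨hw1, hw2⟩
        exact ⟨hkey2 v hv w hw1 hw2, hw2⟩
      · rintro ⟨hw1, hw2⟩
        exact ⟨hD'sub hw1, hw2⟩
    have hdscC : ∀ v ∈ C, dscF anc s v = dscF anc C v := by
      intro v hv
      ext w
      simp only [mem_dscF]
      constructor
      · rintro ⟨hw1, hw2⟩
        refine ⟨Finset.mem_sdiff.2 ⟨hw1, fun hwD => hkey1 v hv w hwD hw2⟩, hw2⟩
      · rintro ⟨hw1, hw2⟩
        exact ⟨hCsub hw1, hw2⟩
    -- first sum
    have hsum1 : ∑ m ∈ MF anc D', ∏ v ∈ AF anc s m, ((hF anc s v : ℚ) / ((hF anc s v : ℚ) - 1))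
        = ((D.card : ℚ) / ((D.card : ℚ) - 1)) *
          ∑ m ∈ MF anc D', ∏ v ∈ AF anc D' m, ((hF anc D' v : ℚ) / ((hF anc D' v : ℚ) - 1)) := by
      rw [Finset.mul_sum]
      refine Finset.sum_congr rfl fun m hm => ?_
      have hmD' : m ∈ D' := (mem_MF.1 hm).1
      have hrm : anc r m := (mem_dscF.1 (Finset.mem_of_mem_erase hmD')).2
      have hAin : AF anc s m = insert r (AF anc D' m) := by
        ext v
        simp only [mem_AF, Finset.mem_insert]
        constructor
        · rintro ⟨hv1, hv2, hv3⟩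
          by_cases hvr : v = r
          · exact Or.inl hvr
          · rcases hchain v r m hv2 hrm with h | h
            · exact absurd (hrmin v hv1 h) hvr
            · exact Or.inr ⟨Finset.mem_erase.2 ⟨hvr, mem_dscF.2 ⟨hv1, h⟩⟩, hv2, hv3⟩
        · rintro (rfl | ⟨hv1, hv2, hv3⟩)
          · exact ⟨hr, hrm, fun h => (Finset.mem_erase.1 hmD').1 h.symm⟩
          · exact ⟨hD'sub hv1, hv2, hv3⟩
      have hrnotA : r ∉ AF anc D' m := fun h => (Finset.notMem_erase r D) (mem_AF.1 h).1
      rw [hAin, Finset.prod_insert hrnotA]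
      have hfr : hF anc s r = D.card := rfl
      rw [hfr]
      congr 1
      refine Finset.prod_congr rfl fun v hv => ?_
      have : dscF anc s v = dscF anc D' v := hdscD' v (mem_AF.1 hv).1
      rw [hF, hF, this]
    -- second sum
    have hsum2 : ∑ m ∈ MF anc C, ∏ v ∈ AF anc s m, ((hF anc s v : ℚ) / ((hF anc s v : ℚ) - 1))
        = ∑ m ∈ MF anc C, ∏ v ∈ AF anc C m, ((hF anc C v : ℚ) / ((hF anc C v : ℚ) - 1)) := by
      refine Finset.sum_congr rfl fun m hm => ?_
      have hmC : m ∈ C := (mem_MF.1 hm).1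
      have hA : AF anc s m = AF anc C m := by
        ext v
        simp only [mem_AF]
        constructor
        · rintro ⟨hv1, hv2, hv3⟩
          have hvD : v ∉ D := by
            intro hvD
            have hrm2 : anc r m := htrans r v m (mem_dscF.1 hvD).2 hv2
            exact (Finset.mem_sdiff.1 hmC).2 (mem_dscF.2 ⟨hCsub hmC, hrm2⟩)
          exact ⟨Finset.mem_sdiff.2 ⟨hv1, hvD⟩, hv2, hv3⟩
        · rintro ⟨hv1, hv2, hv3⟩
          exact ⟨hCsub hv1, hv2, hv3⟩
      rw [hA]
      refine Finset.prod_congr rfl fun v hv => ?_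
      rw [hF, hF, hdscC v (mem_AF.1 hv).1]
    rw [hsum1, hsum2, ih _ hD'lt _ rfl, ih _ hClt _ rfl]
    have hCcard : C.card = s.card - D.card := Finset.card_sdiff_of_subset hDsub
    have hDle : D.card ≤ s.card := Finset.card_le_card hDsub
    rw [hD'card, hCcard]
    have h2 : (2 : ℕ) ≤ D.card := hD2
    push_cast [Nat.cast_sub (by omega : 1 ≤ D.card), Nat.cast_sub hDle]
    have hne0 : (D.card : ℚ) - 1 ≠ 0 := by
      have : (2 : ℚ) ≤ (D.card : ℚ) := by exact_mod_cast h2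
      linarith
    field_simp
    ring

include hrefl htrans hanti hchain in
lemma keyF : ∀ (n : ℕ) (s : Finset V), s.card = n →
    ((histsF anc s).card : ℚ) * ∏ v ∈ s, (hF anc s v : ℚ)
      = (Nat.factorial s.card : ℚ) := by
  intro n
  induction n using Nat.strong_induction_on with
  | _ n ih =>
  intro s hcard
  rcases s.eq_empty_or_nonempty with rfl | hs
  · simp [histsF_empty]
  subst hcard
  have hspos : 1 ≤ s.card := Finset.card_pos.2 hs
  rw [histsF_rec hs]
  push_cast
  rw [Finset.sum_mul]
  have hterm : ∀ m ∈ MF anc s,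
      ((histsF anc (s.erase m)).card : ℚ) * ∏ v ∈ s, (hF anc s v : ℚ)
        = (Nat.factorial (s.card - 1) : ℚ) *
          ∏ v ∈ AF anc s m, ((hF anc s v : ℚ) / ((hF anc s v : ℚ) - 1)) := by
    intro m hm
    obtain ⟨hms, hmax⟩ := mem_MF.1 hm
    have hdm : dscF anc s m = {m} := by
      ext w
      simp only [mem_dscF, Finset.mem_singleton]
      constructor
      · rintro ⟨hw1, hw2⟩
        exact hmax w hw1 hw2
      · rintro rfl
        exact ⟨hms, hrefl _⟩
    have hfm : hF anc s m = 1 := by rw [hF, hdm, Finset.card_singleton]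
    have hprods : ∏ v ∈ s, (hF anc s v : ℚ) = ∏ v ∈ s.erase m, (hF anc s v : ℚ) := by
      rw [← Finset.mul_prod_erase s _ hms, hfm]
      norm_num
    have hAsub : AF anc s m ⊆ s.erase m := by
      intro v hv
      obtain ⟨h1, h2, h3⟩ := mem_AF.1 hv
      exact Finset.mem_erase.2 ⟨h3, h1⟩
    have hpt1 : ∀ v ∈ AF anc s m, (hF anc (s.erase m) v : ℚ) = (hF anc s v : ℚ) - 1 := by
      intro v hv
      obtain ⟨h1, h2, h3⟩ := mem_AF.1 hv
      have hde : dscF anc (s.erase m) v = (dscF anc s v).erase m := by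
        ext w
        simp only [mem_dscF, Finset.mem_erase]
        tauto
      have hmd : m ∈ dscF anc s v := mem_dscF.2 ⟨hms, h2⟩
      have hdpos : 1 ≤ (dscF anc s v).card := Finset.card_pos.2 ⟨m, hmd⟩
      rw [hF, hF, hde, Finset.card_erase_of_mem hmd]
      push_cast [Nat.cast_sub hdpos]
      ring
    have hpt2 : ∀ v ∈ (s.erase m) \ AF anc s m, hF anc (s.erase m) v = hF anc s v := by
      intro v hv
      obtain ⟨hv1, hv2⟩ := Finset.mem_sdiff.1 hv
      have hnanc : ¬ anc v m := by
        intro h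
        exact hv2 (mem_AF.2 ⟨Finset.mem_of_mem_erase hv1, h, (Finset.mem_erase.1 hv1).1⟩)
      have hde : dscF anc (s.erase m) v = dscF anc s v := by
        ext w
        simp only [mem_dscF, Finset.mem_erase]
        constructor
        · tauto
        · rintro ⟨hw1, hw2⟩
          exact ⟨⟨fun hwm => hnanc (hwm ▸ hw2), hw1⟩, hw2⟩
      rw [hF, hF, hde]
    have hpt3 : ∀ v ∈ AF anc s m, (1:ℚ) ≤ (hF anc s v : ℚ) - 1 := by
      intro v hv
      obtain ⟨h1, h2, h3⟩ := mem_AF.1 hv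
      have hsub2 : {v, m} ⊆ dscF anc s v := by
        intro w hw
        rcases Finset.mem_insert.1 hw with rfl | hw
        · exact mem_dscF.2 ⟨h1, hrefl _⟩
        · rw [Finset.mem_singleton.1 hw]
          exact mem_dscF.2 ⟨hms, h2⟩
      have h2le : 2 ≤ hF anc s v := by
        have hc := Finset.card_le_card hsub2
        rwa [Finset.card_insert_of_notMem (by simpa using h3), Finset.card_singleton] at hc
      have : (2:ℚ) ≤ (hF anc s v : ℚ) := by exact_mod_cast h2le
      linarith
    have hihcard : (s.erase m).card < s.card := Finset.card_erase_lt_of_mem hms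
    have hih := ih _ hihcard (s.erase m) rfl
    rw [Finset.card_erase_of_mem hms] at hih
    have hsplitA : ∀ f : V → ℚ, ∏ v ∈ s.erase m, f v
        = (∏ v ∈ (s.erase m) \ AF anc s m, f v) * ∏ v ∈ AF anc s m, f v :=
      fun f => (Finset.prod_sdiff hAsub).symm
    set c := ((histsF anc (s.erase m)).card : ℚ) with hc
    set Fct := ((s.card - 1).factorial : ℚ) with hFct
    have hP : ∏ v ∈ AF anc s m, ((hF anc s v : ℚ) - 1) ≠ 0 := by
      rw [Finset.prod_ne_zero_iff]
      intro v hv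
      have := hpt3 v hv
      intro h
      rw [h] at this
      linarith
    apply mul_right_cancel₀ hP
    calc c * (∏ v ∈ s, (hF anc s v : ℚ)) * ∏ v ∈ AF anc s m, ((hF anc s v : ℚ) - 1)
        = (∏ v ∈ AF anc s m, (hF anc s v : ℚ)) *
            (c * ((∏ v ∈ (s.erase m) \ AF anc s m, (hF anc s v : ℚ)) *
              ∏ v ∈ AF anc s m, ((hF anc s v : ℚ) - 1))) := by
          rw [hprods, hsplitA]
          ring
      _ = (∏ v ∈ AF anc s m, (hF anc s v : ℚ)) *
            (c * ∏ v ∈ s.erase m, (hF anc (s.erase m) v : ℚ)) := by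
          have e1 : ∏ v ∈ (s.erase m) \ AF anc s m, (hF anc (s.erase m) v : ℚ)
              = ∏ v ∈ (s.erase m) \ AF anc s m, (hF anc s v : ℚ) :=
            Finset.prod_congr rfl fun v hv => by rw [hpt2 v hv]
          have e2 : ∏ v ∈ AF anc s m, (hF anc (s.erase m) v : ℚ)
              = ∏ v ∈ AF anc s m, ((hF anc s v : ℚ) - 1) :=
            Finset.prod_congr rfl hpt1
          rw [hsplitA (fun v => (hF anc (s.erase m) v : ℚ)), e1, e2]
      _ = (∏ v ∈ AF anc s m, (hF anc s v : ℚ)) * Fct := by rw [hih]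
      _ = Fct * (∏ v ∈ AF anc s m, ((hF anc s v : ℚ) / ((hF anc s v : ℚ) - 1))) *
            ∏ v ∈ AF anc s m, ((hF anc s v : ℚ) - 1) := by
          rw [mul_comm _ Fct, mul_assoc, ← Finset.prod_mul_distrib]
          congr 1
          refine Finset.prod_congr rfl fun v hv => ?_
          exact (div_mul_cancel₀ _ (by have := hpt3 v hv; intro h; rw [h] at this; linarith)).symm
  rw [Finset.sum_congr rfl hterm, ← Finset.mul_sum,
    identF hrefl htrans hanti hchain _ s rfl]
  obtain ⟨k, hk⟩ : ∃ k, s.card = k + 1 := ⟨s.card - 1, by omega⟩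
  have hk1 : s.card - 1 = k := by omega
  rw [hk1, hk]
  push_cast [Nat.factorial_succ]
  ring

end Hyps

end Abstract

section Graph

variable {G : SimpleGraph V}

/-- `v` lies on every walk from `w` to `u` (ancestor relation rooted at `u`). -/
def ancG (G : SimpleGraph V) (u v w : V) : Prop := ∀ p : G.Walk w u, v ∈ p.support

/-- The unique path from `w` to `u` in a tree. -/
noncomputable def pthTo (hG : G.IsTree) (u w : V) : G.Walk w u :=
  (hG.existsUnique_path w u).choose

lemma pthTo_isPath (hG : G.IsTree) (u w : V) : (pthTo hG u w).IsPath :=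
  (hG.existsUnique_path w u).choose_spec.1

lemma pthTo_eq (hG : G.IsTree) {u w : V} (p : G.Walk w u) (hp : p.IsPath) :
    p = pthTo hG u w :=
  (hG.existsUnique_path w u).choose_spec.2 p hp

lemma ancG_of_path (hG : G.IsTree) {u w v : V} (p : G.Walk w u) (hp : p.IsPath)
    (hv : v ∈ p.support) : ancG G u v w := by
  intro q
  have hb : q.bypass = p :=
    (pthTo_eq hG q.bypass q.bypass_isPath).trans (pthTo_eq hG p hp).symm
  exact q.support_bypass_subset (hb ▸ hv)

lemma ancG_iff (hG : G.IsTree) {u w v : V} :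
    ancG G u v w ↔ v ∈ (pthTo hG u w).support :=
  ⟨fun h => h _, fun h => ancG_of_path hG _ (pthTo_isPath hG u w) h⟩

lemma ancG_refl (u v : V) : ancG G u v v := fun p => p.start_mem_support

lemma ancG_bot (u w : V) : ancG G u u w := fun p => p.end_mem_support

lemma ancG_trans {u a b c : V} (hab : ancG G u a b) (hbc : ancG G u b c) :
    ancG G u a c := by
  intro p
  have hb : b ∈ p.support := hbc p
  exact Walk.support_dropUntil_subset p hb (hab (p.dropUntil b hb))

lemma ancG_antisymm (hG : G.IsTree) {u a b : V} (h1 : ancG G u a b) (h2 : ancG G u b a) :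
    a = b := by
  by_contra hne
  set P := pthTo hG u b with hP
  have hPp : P.IsPath := pthTo_isPath hG u b
  have ha : a ∈ P.support := h1 P
  have hD : (P.dropUntil a ha).IsPath := hPp.dropUntil ha
  have hbD : b ∈ (P.dropUntil a ha).support := h2 _
  have hnd := hPp.support_nodup
  rw [← P.take_spec ha, Walk.support_append, List.nodup_append] at hnd
  have hbtail : b ∈ (P.dropUntil a ha).support.tail := by
    have := (P.dropUntil a ha).support_eq_cons
    rw [this] at hbD
    rcases List.mem_cons.1 hbD with h | h
    · exact absurd h.symm hne
    · exact h
  exact hnd.2.2 b (Walk.start_mem_support _) b hbtail rfl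

lemma ancG_chain (hG : G.IsTree) {u v v' w : V} (h1 : ancG G u v w) (h2 : ancG G u v' w) :
    ancG G u v v' ∨ ancG G u v' v := by
  set P := pthTo hG u w with hPdef
  have hPp : P.IsPath := pthTo_isPath hG u w
  have hv : v ∈ P.support := h1 P
  have hv' : v' ∈ P.support := h2 P
  by_cases hcase : v ∈ (P.dropUntil v' hv').support
  · exact Or.inl (ancG_of_path hG _ (hPp.dropUntil hv') hcase)
  · have hvtake : v ∈ (P.takeUntil v' hv').support := by
      have := hv
      rw [← P.take_spec hv', Walk.mem_support_append_iff] at this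
      tauto
    set T := P.takeUntil v' hv' with hT
    set A := T.dropUntil v hvtake with hA
    set B := P.dropUntil v' hv' with hB
    have hnd := hPp.support_nodup
    rw [← P.take_spec hv', Walk.support_append, List.nodup_append] at hnd
    have hQ : (A.append B).IsPath := by
      apply Walk.IsPath.mk'
      rw [Walk.support_append, List.nodup_append]
      refine ⟨((hPp.takeUntil hv').dropUntil hvtake).support_nodup, ?_, ?_⟩
      · exact hnd.2.1
      · intro x hx1 y hx2 hxy
        subst hxy
        exact hnd.2.2 x (Walk.support_dropUntil_subset T hvtake hx1) x hx2 rfl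
    refine Or.inr (ancG_of_path hG _ hQ ?_)
    rw [Walk.mem_support_append_iff]
    exact Or.inl A.end_mem_support

end Graph

section Equivalence

variable {G : SimpleGraph V}

lemma reachable_induce {S : Set V} {a b : V} (p : G.Walk a b)
    (hp : ∀ x ∈ p.support, x ∈ S) (ha : a ∈ S) (hb : b ∈ S) :
    (G.induce S).Reachable ⟨a, ha⟩ ⟨b, hb⟩ := by
  induction p with
  | nil => rfl
  | @cons x y z h q ih =>
    have hyS : y ∈ S := hp y (by simp [Walk.support_cons])
    have hq : ∀ t ∈ q.support, t ∈ S := fun t ht => hp t (by simp [Walk.support_cons, ht])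
    have hadj : (G.induce S).Adj ⟨x, ha⟩ ⟨y, hyS⟩ := by
      simp only [comap_adj, Function.Embedding.coe_subtype]
      exact h
    exact (hadj.reachable).trans (ih hq hyS hb)

lemma hist_iff [Fintype V] [DecidableEq V] (hG : G.IsTree) (u : V) (l : List V) :
    (IsHistory G l ∧ l.head? = some u) ↔
      (l.Nodup ∧ l.toFinset = Finset.univ ∧ ExtL (ancG G u) l) := by
  constructor
  · rintro ⟨⟨hnd, hall, hconn⟩, hhead⟩
    refine ⟨hnd, Finset.eq_univ_iff_forall.2 (fun v => List.mem_toFinset.2 (hall v)), ?_⟩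
    intro k v w hw hv hanc
    match k with
    | 0 => simp at hw
    | (k+1) =>
    have hk : 1 ≤ k + 1 := Nat.succ_le_succ (Nat.zero_le _)
    set S : Set V := {x | x ∈ l.take (k+1)} with hS
    have hconn' := hconn (k+1) hk
    have hwS : w ∈ S := hw
    have huS : u ∈ S := by
      match l, hhead with
      | a :: t, hhead =>
        have : a = u := by simpa using hhead
        subst this
        simp [hS, List.take_succ_cons]
    obtain ⟨q⟩ := hconn'.preconnected ⟨w, hwS⟩ ⟨u, huS⟩
    have hp := hanc (q.map (SimpleGraph.Embedding.induce S).toHom)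
    replace hp := (congrArg (v ∈ ·) (Walk.support_map (f := (SimpleGraph.Embedding.induce S).toHom) (p := q))).mp hp
    rw [List.mem_map] at hp
    obtain ⟨x, hx1, hx2⟩ := hp
    rw [← hx2]
    exact x.2
  · rintro ⟨hnd, huniv, hext⟩
    have hall : ∀ x : V, x ∈ l := fun x => List.mem_toFinset.1 (huniv ▸ Finset.mem_univ x)
    have hne : l ≠ [] := by
      intro h
      subst h
      exact absurd (hall u) (List.not_mem_nil (a := u))
    obtain ⟨a, t, rfl⟩ := List.exists_cons_of_ne_nil hne
    have hau : a = u := by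
      have h1 : u ∈ (a :: t).take 1 :=
        hext 1 u a (by simp) (hall u) (ancG_bot u a)
      have : u = a := by simpa using h1
      exact this.symm
    subst hau
    refine ⟨⟨hnd, hall, ?_⟩, by simp⟩
    intro k hk
    set S : Set V := {x | x ∈ (a :: t).take k} with hS
    have haS : a ∈ S := by
      match k, hk with
      | (k+1), _ => simp [hS, List.take_succ_cons]
    have hcl : ∀ w ∈ S, ∀ x ∈ (pthTo hG a w).support, x ∈ S := by
      intro w hw x hx
      exact hext k x w hw (hall x) (ancG_of_path hG _ (pthTo_isPath hG a w) hx)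
    rw [SimpleGraph.connected_iff]
    refine ⟨?_, ⟨⟨a, haS⟩⟩⟩
    intro x y
    have hrx : (G.induce S).Reachable x ⟨a, haS⟩ := by
      have := reachable_induce (pthTo hG a ↑x) (hcl ↑x x.2) x.2 haS
      simpa using this
    have hry : (G.induce S).Reachable y ⟨a, haS⟩ := by
      have := reachable_induce (pthTo hG a ↑y) (hcl ↑y y.2) y.2 haS
      simpa using this
    exact hrx.trans hry.symm

end Equivalence

theorem stmt0 [Fintype V] [DecidableEq V] (G : SimpleGraph V) (hG : G.IsTree) (u : V) :
    nHist G u * ∏ v ∈ Finset.univ.erase u, subtreeSize G u v =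
      Nat.factorial (Fintype.card V - 1) := by
  have hrefl : ∀ v : V, ancG G u v v := fun v => ancG_refl u v
  have htrans : ∀ a b c : V, ancG G u a b → ancG G u b c → ancG G u a c :=
    fun a b c h1 h2 => ancG_trans h1 h2
  have hanti : ∀ a b : V, ancG G u a b → ancG G u b a → a = b :=
    fun a b h1 h2 => ancG_antisymm hG h1 h2
  have hchain : ∀ v v' w : V, ancG G u v w → ancG G u v' w → ancG G u v v' ∨ ancG G u v' v :=
    fun v v' w h1 h2 => ancG_chain hG h1 h2
  -- identify nHist with the abstract count
  have h1 : nHist G u = (histsF (ancG G u) Finset.univ).card := by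
    rw [nHist]
    rw [Nat.card_congr (Equiv.subtypeEquivRight
      (fun l => (hist_iff hG u l).trans (mem_histsF _).symm))]
    exact Nat.card_eq_finsetCard _
  -- identify subtreeSize with hF
  have h2 : ∀ v : V, subtreeSize G u v = hF (ancG G u) Finset.univ v := by
    intro v
    rw [subtreeSize, hF]
    rw [Nat.card_eq_fintype_card]
    rw [Fintype.card_subtype]
    congr 1
  -- the key formula
  have hkey := keyF hrefl htrans hanti hchain Finset.univ.card Finset.univ rfl
  have hFu : hF (ancG G u) Finset.univ u = Fintype.card V := by
    rw [hF]
    have : dscF (ancG G u) Finset.univ u = Finset.univ := by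
      apply Finset.eq_univ_iff_forall.2
      intro w
      exact mem_dscF.2 ⟨Finset.mem_univ w, ancG_bot u w⟩
    rw [this, Finset.card_univ]
  rw [← Finset.mul_prod_erase Finset.univ _ (Finset.mem_univ u), hFu] at hkey
  have hnV : Nonempty V := hG.isConnected.nonempty
  have hn1 : 1 ≤ Fintype.card V := Fintype.card_pos
  obtain ⟨k, hk⟩ : ∃ k, Fintype.card V = k + 1 := ⟨Fintype.card V - 1, by omega⟩
  have hk1 : Fintype.card V - 1 = k := by omega
  rw [Finset.card_univ, hk] at hkey
  -- cast the goal to ℚ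
  have : ((nHist G u * ∏ v ∈ Finset.univ.erase u, subtreeSize G u v : ℕ) : ℚ)
      = ((Nat.factorial (Fintype.card V - 1) : ℕ) : ℚ) := by
    push_cast
    rw [h1, hk1]
    have hprod : ∏ v ∈ Finset.univ.erase u, (subtreeSize G u v : ℚ)
        = ∏ v ∈ Finset.univ.erase u, (hF (ancG G u) Finset.univ v : ℚ) :=
      Finset.prod_congr rfl fun v _ => by rw [h2 v]
    rw [hprod]
    have hcancel : ((k:ℚ) + 1) ≠ 0 := by positivity
    apply mul_left_cancel₀ hcancel
    push_cast at hkey ⊢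
    calc ((k:ℚ)+1) * (((histsF (ancG G u) Finset.univ).card : ℚ) *
            ∏ v ∈ Finset.univ.erase u, (hF (ancG G u) Finset.univ v : ℚ))
        = ((histsF (ancG G u) Finset.univ).card : ℚ) * (((k:ℚ)+1) *
            ∏ v ∈ Finset.univ.erase u, (hF (ancG G u) Finset.univ v : ℚ)) := by ring
      _ = ((k+1).factorial : ℚ) := by rw [← hkey]
      _ = ((k:ℚ)+1) * (k.factorial : ℚ) := by
          rw [Nat.factorial_succ]; push_cast; ring
  exact_mod_cast this
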